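/- Let 1 ≤ p < ∞ and let G1 ⊂ G ⊊ R^n be domains such that G1 is midpoint convex (for all x, y ∈ G1 the midpoint (x+y)/2 lies in G1). Then b_{G1,p}(x,y) ≥ b_{G,p}(x,y) for all x, y ∈ G1. -/
import Mathlib

open Set

lemma preconn_frontier {α : Type*} [TopologicalSpace α] {s A : Set α}
    (hs : IsPreconnected s) (h1 : (s ∩ A).Nonempty) (h2 : (s ∩ Aᶜ).Nonempty) :
    (s ∩ frontier A).Nonempty := by
  by_contra h
  rw [Set.not_nonempty_iff_eq_empty] at h
  have hcov : s ⊆ interior A ∪ interior Aᶜ := by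
    intro z hz
    have hz' : z ∉ frontier A := fun hf => Set.eq_empty_iff_forall_notMem.mp h z ⟨hz, hf⟩
    rcases Classical.em (z ∈ closure A) with hc | hc
    · left
      by_contra hi
      exact hz' ⟨hc, hi⟩
    · right
      rw [interior_compl]
      exact hc
  have h1' : (s ∩ interior A).Nonempty := by
    obtain ⟨z, hzs, hzA⟩ := h1
    rcases hcov hzs with hi | hi
    · exact ⟨z, hzs, hi⟩
    · exact absurd (interior_subset hi hzA) (by simp)
  have h2' : (s ∩ interior Aᶜ).Nonempty := by
    obtain ⟨z, hzs, hzA⟩ := h2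
    rcases hcov hzs with hi | hi
    · exact absurd hzA (by simp [interior_subset hi])
    · exact ⟨z, hzs, hi⟩
  obtain ⟨z, _, hz1, hz2⟩ := hs _ _ isOpen_interior isOpen_interior hcov h1' h2'
  exact (interior_subset hz2) (interior_subset hz1)

/-- Barrlund distance with parameter `p` in a domain `D`. -/
noncomputable def barrlund {n : ℕ} (D : Set (EuclideanSpace ℝ (Fin n))) (p : ℝ)
    (x y : EuclideanSpace ℝ (Fin n)) : ℝ :=
  sSup ((fun z => dist x y / (dist x z ^ p + dist y z ^ p) ^ (1 / p)) '' frontier D)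

theorem stmt5 {n : ℕ} (G1 G : Set (EuclideanSpace ℝ (Fin n)))
    (hG1 : IsOpen G1) (hG1c : IsConnected G1)
    (hG : IsOpen G) (hGc : IsConnected G) (hGne : G ≠ univ) (hsub : G1 ⊆ G)
    (hmid : ∀ x ∈ G1, ∀ y ∈ G1, (2⁻¹ : ℝ) • (x + y) ∈ G1)
    (p : ℝ) (hp : 1 ≤ p) (x y : EuclideanSpace ℝ (Fin n)) (hx : x ∈ G1) (hy : y ∈ G1) :
    barrlund G p x y ≤ barrlund G1 p x y := by
  have hp0 : (0 : ℝ) < p := lt_of_lt_of_le one_pos hp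
  have hG1ne : G1 ≠ univ := fun h => hGne (univ_subset_iff.mp (h ▸ hsub))
  have hfrG : (frontier G).Nonempty := nonempty_frontier_iff.mpr ⟨hGc.nonempty, hGne⟩
  obtain ⟨ε, hε, hball⟩ := Metric.isOpen_iff.mp hG1 x hx
  have hnotin : ∀ w ∈ frontier G1, w ∉ G1 := fun w hw hwG =>
    Set.eq_empty_iff_forall_notMem.mp hG1.inter_frontier_eq w ⟨hwG, hw⟩
  have hεle : ∀ w ∈ frontier G1, ε ≤ dist x w := by
    intro w hw
    by_contra h
    push_neg at h
    exact hnotin w hw (hball (by simpa [Metric.mem_ball, dist_comm] using h))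
  -- denominator lower bound on frontier G1
  have hden : ∀ w ∈ frontier G1, ε ≤ (dist x w ^ p + dist y w ^ p) ^ (1 / p) := by
    intro w hw
    have h1 : ε ^ p ≤ dist x w ^ p + dist y w ^ p :=
      le_add_of_le_of_nonneg (Real.rpow_le_rpow hε.le (hεle w hw) hp0.le)
        (Real.rpow_nonneg dist_nonneg p)
    calc ε = (ε ^ p) ^ (1 / p) := by
            rw [one_div, Real.rpow_rpow_inv hε.le hp0.ne']
      _ ≤ (dist x w ^ p + dist y w ^ p) ^ (1 / p) :=
            Real.rpow_le_rpow (by positivity) h1 (by positivity)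
  have hbdd : BddAbove ((fun z => dist x y / (dist x z ^ p + dist y z ^ p) ^ (1 / p)) ''
      frontier G1) := by
    refine ⟨dist x y / ε, ?_⟩
    rintro _ ⟨w, hw, rfl⟩
    exact div_le_div_of_nonneg_left dist_nonneg hε (hden w hw)
  unfold barrlund
  refine csSup_le (hfrG.image _) ?_
  rintro _ ⟨z, hz, rfl⟩
  have hzG : z ∉ G := fun h => Set.eq_empty_iff_forall_notMem.mp hG.inter_frontier_eq z ⟨h, hz⟩
  set m : EuclideanSpace ℝ (Fin n) := (2⁻¹ : ℝ) • (x + y) with hmdef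
  have hm : m ∈ G1 := hmid x hx y hy
  obtain ⟨w, hwseg, hwfr⟩ := preconn_frontier (convex_segment m z).isPreconnected
    ⟨m, left_mem_segment ℝ m z, hm⟩ ⟨z, right_mem_segment ℝ m z, fun h => hzG (hsub h)⟩
  rw [segment_eq_image] at hwseg
  obtain ⟨t, ⟨ht0, ht1⟩, rfl⟩ := hwseg
  set w : EuclideanSpace ℝ (Fin n) := (1 - t) • m + t • z with hwdef
  -- distance to midpoint
  have hdxm : dist x m = dist x y / 2 := by
    rw [dist_eq_norm, dist_eq_norm]
    have h : x - m = (2⁻¹ : ℝ) • (x - y) := by rw [hmdef]; module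
    rw [h, norm_smul, Real.norm_eq_abs, abs_of_nonneg (by norm_num : (0:ℝ) ≤ 2⁻¹)]
    ring
  have hdym : dist y m = dist x y / 2 := by
    rw [dist_eq_norm, dist_eq_norm]
    have h : y - m = (2⁻¹ : ℝ) • (y - x) := by rw [hmdef]; module
    rw [h, norm_smul, Real.norm_eq_abs, abs_of_nonneg (by norm_num : (0:ℝ) ≤ 2⁻¹),
      norm_sub_rev]
    ring
  have hdxw : dist x w ≤ (1 - t) * (dist x y / 2) + t * dist x z := by
    have hxx : x = (1 - t) • x + t • x := by module
    calc dist x w = dist ((1 - t) • x + t • x) ((1 - t) • m + t • z) := by rw [← hxx]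
      _ ≤ dist ((1 - t) • x) ((1 - t) • m) + dist (t • x) (t • z) := dist_add_add_le _ _ _ _
      _ = (1 - t) * dist x m + t * dist x z := by
          rw [dist_smul₀, dist_smul₀, Real.norm_eq_abs, Real.norm_eq_abs,
            abs_of_nonneg (by linarith), abs_of_nonneg ht0]
      _ = (1 - t) * (dist x y / 2) + t * dist x z := by rw [hdxm]
  have hdyw : dist y w ≤ (1 - t) * (dist x y / 2) + t * dist y z := by
    have hyy : y = (1 - t) • y + t • y := by module
    calc dist y w = dist ((1 - t) • y + t • y) ((1 - t) • m + t • z) := by rw [← hyy]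
      _ ≤ dist ((1 - t) • y) ((1 - t) • m) + dist (t • y) (t • z) := dist_add_add_le _ _ _ _
      _ = (1 - t) * dist y m + t * dist y z := by
          rw [dist_smul₀, dist_smul₀, Real.norm_eq_abs, Real.norm_eq_abs,
            abs_of_nonneg (by linarith), abs_of_nonneg ht0]
      _ = (1 - t) * (dist x y / 2) + t * dist y z := by rw [hdym]
  set a := dist x z
  set b := dist y z
  have ha : 0 ≤ a := dist_nonneg
  have hb : 0 ≤ b := dist_nonneg
  have htri : dist x y ≤ a + b := dist_triangle_right x y z
  have hA : dist x w ≤ (1 + t) / 2 * a + (1 - t) / 2 * b := by nlinarith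
  have hB : dist y w ≤ (1 - t) / 2 * a + (1 + t) / 2 * b := by nlinarith
  have hconv := convexOn_rpow hp
  have hApow : ((1 + t) / 2 * a + (1 - t) / 2 * b) ^ p ≤ (1 + t) / 2 * a ^ p + (1 - t) / 2 * b ^ p := by
    have := hconv.2 (mem_Ici.mpr ha) (mem_Ici.mpr hb)
      (by linarith : (0:ℝ) ≤ (1 + t) / 2) (by linarith : (0:ℝ) ≤ (1 - t) / 2) (by ring)
    simpa [smul_eq_mul] using this
  have hBpow : ((1 - t) / 2 * a + (1 + t) / 2 * b) ^ p ≤ (1 - t) / 2 * a ^ p + (1 + t) / 2 * b ^ p := by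
    have := hconv.2 (mem_Ici.mpr ha) (mem_Ici.mpr hb)
      (by linarith : (0:ℝ) ≤ (1 - t) / 2) (by linarith : (0:ℝ) ≤ (1 + t) / 2) (by ring)
    simpa [smul_eq_mul] using this
  have hxwp : dist x w ^ p ≤ ((1 + t) / 2 * a + (1 - t) / 2 * b) ^ p :=
    Real.rpow_le_rpow dist_nonneg hA hp0.le
  have hywp : dist y w ^ p ≤ ((1 - t) / 2 * a + (1 + t) / 2 * b) ^ p :=
    Real.rpow_le_rpow dist_nonneg hB hp0.le
  have hsum : dist x w ^ p + dist y w ^ p ≤ a ^ p + b ^ p := by nlinarith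
  have hdenle : (dist x w ^ p + dist y w ^ p) ^ (1 / p) ≤ (a ^ p + b ^ p) ^ (1 / p) :=
    Real.rpow_le_rpow (by positivity) hsum (by positivity)
  have hpos : (0 : ℝ) < (dist x w ^ p + dist y w ^ p) ^ (1 / p) :=
    lt_of_lt_of_le hε (hden w hwfr)
  calc dist x y / (a ^ p + b ^ p) ^ (1 / p)
      ≤ dist x y / (dist x w ^ p + dist y w ^ p) ^ (1 / p) :=
        div_le_div_of_nonneg_left dist_nonneg hpos hdenle
    _ ≤ sSup ((fun z => dist x y / (dist x z ^ p + dist y z ^ p) ^ (1 / p)) '' frontier G1) :=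
        le_csSup hbdd ⟨w, hwfr, rfl⟩
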